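/- The group U(L) of ℤ[i]-module automorphisms of L preserving the Hermitian form h has order exactly 96 = 2⁵·3. -/

import Mathlib

set_option synthInstance.maxHeartbeats 1000000
set_option maxHeartbeats 1000000

noncomputable section

open Complex

/-- The Gaussian integers `ℤ[i]`, as a subring of `ℂ`. -/
def RI : Subring ℂ := Subring.closure {Complex.I}

/-- The lattice `L = {(a,b) ∈ ℤ[i]² : a − b ∈ (1+i)ℤ[i]}`, as a `ℤ[i]`-submodule of `ℂ²`. -/
def Lsub : Submodule ↥RI (Fin 2 → ℂ) where
  carrier := {v | (∀ i, v i ∈ RI) ∧ ∃ c ∈ RI, v 0 - v 1 = (1 + Complex.I) * c}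
  add_mem' := by
    rintro v w ⟨hv, c, hc, hvc⟩ ⟨hw, d, hd, hwd⟩
    refine ⟨fun i => RI.add_mem (hv i) (hw i), c + d, RI.add_mem hc hd, ?_⟩
    simp only [Pi.add_apply]
    linear_combination hvc + hwd
  zero_mem' := ⟨fun _ => RI.zero_mem, 0, RI.zero_mem, by simp⟩
  smul_mem' := by
    rintro a v ⟨hv, c, hc, hvc⟩
    refine ⟨fun i => ?_, (a : ℂ) * c, RI.mul_mem a.2 hc, ?_⟩
    · show (a • v) i ∈ RI
      rw [Pi.smul_apply]
      exact RI.mul_mem a.2 (hv i)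
    · show (a • v) 0 - (a • v) 1 = _
      rw [Pi.smul_apply, Pi.smul_apply]
      show (a : ℂ) * v 0 - (a : ℂ) * v 1 = _
      linear_combination (a : ℂ) * hvc

/-- The negative-definite Hermitian form `h((a,b),(a',b')) = −(conj(a)a' + conj(b)b')`. -/
def hForm (x y : Fin 2 → ℂ) : ℂ :=
  -((starRingEnd ℂ) (x 0) * y 0 + (starRingEnd ℂ) (x 1) * y 1)
abbrev K := GaussianInt
open GaussianInt

theorem hI : Complex.I ∈ RI := Subring.subset_closure rfl

theorem hne : (1 : ℂ) + I ≠ 0 := by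
  intro h
  have := congrArg Complex.im h
  simp at this

def b1 : Lsub := ⟨![1,1], ⟨by intro i; fin_cases i <;> simp [RI.one_mem, RI.zero_mem], 0, RI.zero_mem, by simp⟩⟩
def b2 : Lsub := ⟨![1+I,0], ⟨by intro i; fin_cases i <;> simp [RI.add_mem RI.one_mem hI, RI.zero_mem], 1, RI.one_mem, by simp⟩⟩

def c1 (v : Fin 2 → ℂ) : ℂ := v 1
def c2 (v : Fin 2 → ℂ) : ℂ := (v 0 - v 1) / (1 + I)

theorem c1_mem {v : Fin 2 → ℂ} (hv : v ∈ Lsub) : c1 v ∈ RI := hv.1 1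

theorem c2_eq {v : Fin 2 → ℂ} (hv : v ∈ Lsub) : ∃ c ∈ RI, c2 v = c := by
  obtain ⟨-, c, hc, hvc⟩ := hv
  exact ⟨c, hc, by rw [c2, hvc]; field_simp [hne]⟩

theorem c2_mem {v : Fin 2 → ℂ} (hv : v ∈ Lsub) : c2 v ∈ RI := by
  obtain ⟨c, hc, h⟩ := c2_eq hv; rwa [h]

noncomputable def r1 (x : Lsub) : RI := ⟨c1 x.1, c1_mem x.2⟩
noncomputable def r2 (x : Lsub) : RI := ⟨c2 x.1, c2_mem x.2⟩

-- coe of smul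
example (a : RI) (x : Lsub) (i : Fin 2) : (((a • x) : Lsub) : Fin 2 → ℂ) i = (a : ℂ) * (x : Fin 2 → ℂ) i := by
  rfl

theorem decomp (x : Lsub) : x = r1 x • b1 + r2 x • b2 := by
  apply Subtype.ext
  funext i
  have h : ((r1 x • b1 + r2 x • b2 : Lsub) : Fin 2 → ℂ) i
      = c1 x.1 * (b1 : Fin 2 → ℂ) i + c2 x.1 * (b2 : Fin 2 → ℂ) i := by
    simp only [Submodule.coe_add, Submodule.coe_smul, Pi.add_apply, Pi.smul_apply, r1, r2]
    rfl
  rw [h]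
  fin_cases i <;> simp [b1, b2, c1, c2] <;> field_simp [hne] <;> ring

theorem hne' : (1 : ℂ) - I ≠ 0 := by
  intro h
  have := congrArg Complex.im h
  simp at this

theorem zmem (z : K) : (z : ℂ) ∈ RI := by
  rw [toComplex_def]
  exact RI.add_mem (intCast_mem RI _) (RI.mul_mem (intCast_mem RI _) hI)

theorem zsurj {r : ℂ} (hr : r ∈ RI) : ∃ z : K, (z : ℂ) = r := by
  have h : RI ≤ GaussianInt.toComplex.range := by
    rw [RI, Subring.closure_le]
    intro x hx
    rw [Set.mem_singleton_iff] at hx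
    subst hx
    exact ⟨⟨0, 1⟩, by simp [toComplex_def']⟩
  exact h hr

noncomputable def xi (r : RI) : K := Classical.choose (zsurj r.2)

theorem xi_spec (r : RI) : ((xi r : K) : ℂ) = (r : ℂ) := Classical.choose_spec (zsurj r.2)

theorem conj_c2 (v : Fin 2 → ℂ) :
    (starRingEnd ℂ) (c2 v) = ((starRingEnd ℂ) (v 0) - (starRingEnd ℂ) (v 1)) / (1 - I) := by
  rw [c2, map_div₀]
  simp
  ring_nf


theorem key (u1 u2 w1 w2 : ℂ) :
    hForm ![u1 + u2*(1+I), u1] ![w1 + w2*(1+I), w1] =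
    -(2 * (starRingEnd ℂ) u1 * w1 + (1+I) * (starRingEnd ℂ) u1 * w2
      + (1-I) * (starRingEnd ℂ) u2 * w1 + 2 * (starRingEnd ℂ) u2 * w2) := by
  simp only [hForm, Matrix.cons_val_zero, Matrix.cons_val_one, Matrix.head_cons,
    map_add, map_mul, map_one, Complex.conj_I]
  linear_combination ((starRingEnd ℂ) u2 * w2) * Complex.I_sq

theorem vec_eq (x : Fin 2 → ℂ) : x = ![c1 x + c2 x * (1+I), c1 x] := by
  funext i
  fin_cases i
  · show x 0 = c1 x + c2 x * (1+I)
    rw [c1, c2, div_mul_cancel₀ _ hne]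
    ring
  · rfl

theorem hrep (x y : Fin 2 → ℂ) : hForm x y =
    -(2 * (starRingEnd ℂ) (c1 x) * c1 y + (1+I) * (starRingEnd ℂ) (c1 x) * c2 y
      + (1-I) * (starRingEnd ℂ) (c2 x) * c1 y + 2 * (starRingEnd ℂ) (c2 x) * c2 y) := by
  conv_lhs => rw [vec_eq x, vec_eq y]
  exact key _ _ _ _

-- the action of a Gaussian-integer matrix in the basis b1, b2
def T (B : Matrix (Fin 2) (Fin 2) K) (v : Fin 2 → ℂ) : Fin 2 → ℂ :=
  ![((B 0 0 : ℂ) * c1 v + (B 0 1 : ℂ) * c2 v) + ((B 1 0 : ℂ) * c1 v + (B 1 1 : ℂ) * c2 v) * (1+I),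
    (B 0 0 : ℂ) * c1 v + (B 0 1 : ℂ) * c2 v]

theorem T_apply0 (B : Matrix (Fin 2) (Fin 2) K) (v : Fin 2 → ℂ) :
    T B v 0 = ((B 0 0 : ℂ) * c1 v + (B 0 1 : ℂ) * c2 v)
      + ((B 1 0 : ℂ) * c1 v + (B 1 1 : ℂ) * c2 v) * (1+I) := rfl

theorem T_apply1 (B : Matrix (Fin 2) (Fin 2) K) (v : Fin 2 → ℂ) :
    T B v 1 = (B 0 0 : ℂ) * c1 v + (B 0 1 : ℂ) * c2 v := rfl

theorem c1_T (B : Matrix (Fin 2) (Fin 2) K) (v : Fin 2 → ℂ) :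
    c1 (T B v) = (B 0 0 : ℂ) * c1 v + (B 0 1 : ℂ) * c2 v := rfl

theorem c2_T (B : Matrix (Fin 2) (Fin 2) K) (v : Fin 2 → ℂ) :
    c2 (T B v) = (B 1 0 : ℂ) * c1 v + (B 1 1 : ℂ) * c2 v := by
  show (T B v 0 - T B v 1) / (1 + I) = _
  show (((B 0 0 : ℂ) * c1 v + (B 0 1 : ℂ) * c2 v) + ((B 1 0 : ℂ) * c1 v + (B 1 1 : ℂ) * c2 v) * (1+I)
    - ((B 0 0 : ℂ) * c1 v + (B 0 1 : ℂ) * c2 v)) / (1 + I) = _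
  rw [add_sub_cancel_left, mul_div_assoc, div_self hne, mul_one]

theorem T_eq (B : Matrix (Fin 2) (Fin 2) K) (v : Fin 2 → ℂ) :
    T B v = ![c1 (T B v) + c2 (T B v) * (1+I), c1 (T B v)] := by
  rw [c1_T, c2_T]; rfl

theorem T_mem (B : Matrix (Fin 2) (Fin 2) K) {v : Fin 2 → ℂ} (hv : v ∈ Lsub) : T B v ∈ Lsub := by
  have h1 : c1 v ∈ RI := c1_mem hv
  have h2 : c2 v ∈ RI := c2_mem hv
  have k1 : (B 0 0 : ℂ) * c1 v + (B 0 1 : ℂ) * c2 v ∈ RI :=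
    RI.add_mem (RI.mul_mem (zmem _) h1) (RI.mul_mem (zmem _) h2)
  have k2 : (B 1 0 : ℂ) * c1 v + (B 1 1 : ℂ) * c2 v ∈ RI :=
    RI.add_mem (RI.mul_mem (zmem _) h1) (RI.mul_mem (zmem _) h2)
  refine ⟨fun i => ?_, (B 1 0 : ℂ) * c1 v + (B 1 1 : ℂ) * c2 v, k2, ?_⟩
  · fin_cases i
    · exact RI.add_mem k1 (RI.mul_mem k2 (RI.add_mem RI.one_mem hI))
    · exact k1
  · show T B v 0 - T B v 1 = _
    simp only [T, Matrix.cons_val_zero, Matrix.cons_val_one, Matrix.head_cons]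
    ring

theorem c1_add (v w : Fin 2 → ℂ) : c1 (v + w) = c1 v + c1 w := rfl
theorem c2_add (v w : Fin 2 → ℂ) : c2 (v + w) = c2 v + c2 w := by
  show ((v + w) 0 - (v + w) 1) / (1+I) = _
  show ((v 0 + w 0) - (v 1 + w 1)) / (1+I) = _
  rw [c2, c2]
  ring
theorem c1_smul (a : ℂ) (v : Fin 2 → ℂ) : c1 (a • v) = a * c1 v := rfl
theorem c2_smul (a : ℂ) (v : Fin 2 → ℂ) : c2 (a • v) = a * c2 v := by
  show ((a • v) 0 - (a • v) 1) / (1+I) = _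
  show (a * v 0 - a * v 1) / (1+I) = _
  rw [c2]
  ring

theorem T_add (B : Matrix (Fin 2) (Fin 2) K) (v w : Fin 2 → ℂ) : T B (v + w) = T B v + T B w := by
  funext i
  fin_cases i <;> simp [T, c1_add, c2_add] <;> ring

theorem T_smul (B : Matrix (Fin 2) (Fin 2) K) (a : ℂ) (v : Fin 2 → ℂ) :
    T B (a • v) = a • T B v := by
  funext i
  fin_cases i <;> simp [T, c1_smul, c2_smul] <;> ring

theorem T_comp (B C : Matrix (Fin 2) (Fin 2) K) (v : Fin 2 → ℂ) :
    T C (T B v) = T (C * B) v := by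
  have m : ∀ i j, ((C * B) i j : ℂ) = (C i 0 : ℂ) * (B 0 j : ℂ) + (C i 1 : ℂ) * (B 1 j : ℂ) := by
    intro i j
    rw [Matrix.mul_apply, Fin.sum_univ_two]
    push_cast [toComplex_add, toComplex_mul]
    ring
  funext i
  fin_cases i <;>
    simp only [Fin.zero_eta, Fin.mk_one, T_apply0, T_apply1, c1_T, c2_T, m] <;>
    ring

theorem T_one (v : Fin 2 → ℂ) : T 1 v = v := by
  have m0 : ((1 : Matrix (Fin 2) (Fin 2) K) 0 0 : ℂ) = 1 := by norm_num
  have m3 : ((1 : Matrix (Fin 2) (Fin 2) K) 1 1 : ℂ) = 1 := by norm_num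
  have m1 : ((1 : Matrix (Fin 2) (Fin 2) K) 0 1 : ℂ) = 0 := by norm_num [Matrix.one_apply]
  have m2 : ((1 : Matrix (Fin 2) (Fin 2) K) 1 0 : ℂ) = 0 := by norm_num [Matrix.one_apply]
  funext i
  fin_cases i
  · simp only [Fin.zero_eta, T_apply0, m0, m1, m2, m3, one_mul, zero_mul, add_zero, zero_add,
      c1, c2, div_mul_cancel₀ _ hne]
    ring
  · simp only [Fin.mk_one, T_apply1, m0, m1, one_mul, zero_mul, add_zero, zero_add]
    rfl
-- ## Gram matrix side over the Gaussian integers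
def Gr : Matrix (Fin 2) (Fin 2) K := !![2, ⟨1,1⟩; ⟨1,-1⟩, 2]
def SP (B : Matrix (Fin 2) (Fin 2) K) : Prop := B.conjTranspose * Gr * B = Gr
def Q (s t : K) : Prop :=
  2 * (star s * s) + ⟨1,1⟩ * (star s * t) + ⟨1,-1⟩ * (star t * s) + 2 * (star t * t) = 2
def R (s t s' t' : K) : Prop :=
  2 * (star s * s') + ⟨1,1⟩ * (star s * t') + ⟨1,-1⟩ * (star t * s') + 2 * (star t * t') = ⟨1,1⟩
instance (s t : K) : Decidable (Q s t) := by unfold Q; infer_instance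
instance (s t s' t' : K) : Decidable (R s t s' t') := by unfold R; infer_instance

open Matrix in
theorem SP_iff (B : Matrix (Fin 2) (Fin 2) K) :
    SP B ↔ Q (B 0 0) (B 1 0) ∧ Q (B 0 1) (B 1 1) ∧ R (B 0 0) (B 1 0) (B 0 1) (B 1 1) := by
  unfold SP Q R
  rw [← Matrix.ext_iff]
  simp only [Fin.forall_fin_two, Matrix.mul_apply, Fin.sum_univ_two, Matrix.conjTranspose_apply,
    Gr, Matrix.cons_val', Matrix.cons_val_zero, Matrix.cons_val_one, Matrix.head_cons,
    Matrix.empty_val', Matrix.cons_val_fin_one, Matrix.head_fin_const, Matrix.of_apply]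
  constructor
  · rintro ⟨⟨h00, h01⟩, h10, h11⟩
    refine ⟨by linear_combination h00, by linear_combination h11, by linear_combination h01⟩
  · rintro ⟨h0, h1, hc⟩
    have hc' := congrArg star hc
    simp only [star_add, star_mul', star_star, star_ofNat, Zsqrtd.star_mk, neg_neg] at hc'
    refine ⟨⟨by linear_combination h0, by linear_combination hc⟩, by linear_combination hc',
      by linear_combination h1⟩

theorem Q_bound {s t : K} (h : Q s t) :
    s.re ∈ Finset.Icc (-1:ℤ) 1 ∧ s.im ∈ Finset.Icc (-1:ℤ) 1 ∧
    t.re ∈ Finset.Icc (-1:ℤ) 1 ∧ t.im ∈ Finset.Icc (-1:ℤ) 1 := by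
  obtain ⟨a, b⟩ := s; obtain ⟨c, d⟩ := t
  rw [Q, Zsqrtd.ext_iff] at h
  obtain ⟨h1, h2⟩ := h
  simp [Zsqrtd.re_mul, Zsqrtd.im_mul] at h1 h2
  have hN : a^2 + b^2 + c^2 + d^2 ≤ 3 := by
    nlinarith [sq_nonneg (a*(c+d) - b*(c-d)), sq_nonneg (a^2+b^2-c^2-d^2),
      sq_nonneg (a^2+b^2+c^2+d^2-2), sq_nonneg a, sq_nonneg b, sq_nonneg c, sq_nonneg d]
  simp only [Finset.mem_Icc]
  refine ⟨⟨?_, ?_⟩, ⟨?_, ?_⟩, ⟨?_, ?_⟩, ⟨?_, ?_⟩⟩ <;>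
    nlinarith [sq_nonneg a, sq_nonneg b, sq_nonneg c, sq_nonneg d, sq_nonneg (a-1),
      sq_nonneg (a+1), sq_nonneg (b-1), sq_nonneg (b+1), sq_nonneg (c-1), sq_nonneg (c+1),
      sq_nonneg (d-1), sq_nonneg (d+1)]

def entryF : Finset K := ((Finset.Icc (-1:ℤ) 1) ×ˢ (Finset.Icc (-1:ℤ) 1)).image (fun p => ⟨p.1, p.2⟩)
def colF : Finset (K × K) := (entryF ×ˢ entryF).filter (fun p => Q p.1 p.2)
def pairF : Finset ((K × K) × (K × K)) := (colF ×ˢ colF).filter (fun p => R p.1.1 p.1.2 p.2.1 p.2.2)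
def FF : Finset (Matrix (Fin 2) (Fin 2) K) := pairF.image (fun p => !![p.1.1, p.2.1; p.1.2, p.2.2])

set_option maxRecDepth 100000 in
theorem FF_card : FF.card = 96 := by decide

theorem mem_entryF {z : K} (h1 : z.re ∈ Finset.Icc (-1:ℤ) 1) (h2 : z.im ∈ Finset.Icc (-1:ℤ) 1) :
    z ∈ entryF := by
  rw [entryF, Finset.mem_image]
  exact ⟨(z.re, z.im), Finset.mem_product.2 ⟨h1, h2⟩, rfl⟩

theorem mem_FF (B : Matrix (Fin 2) (Fin 2) K) : B ∈ FF ↔ SP B := by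
  rw [FF, Finset.mem_image]
  constructor
  · rintro ⟨p, hp, rfl⟩
    simp only [pairF, colF, Finset.mem_filter, Finset.mem_product] at hp
    obtain ⟨⟨⟨-, hq1⟩, -, hq2⟩, hr⟩ := hp
    rw [SP_iff]
    simp only [Matrix.cons_val', Matrix.cons_val_zero, Matrix.cons_val_one, Matrix.head_cons,
      Matrix.empty_val', Matrix.cons_val_fin_one, Matrix.head_fin_const, Matrix.of_apply]
    exact ⟨hq1, hq2, hr⟩
  · intro h
    rw [SP_iff] at h
    obtain ⟨hq1, hq2, hr⟩ := h
    refine ⟨((B 0 0, B 1 0), (B 0 1, B 1 1)), ?_, (Matrix.eta_fin_two B).symm⟩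
    obtain ⟨a1, a2, a3, a4⟩ := Q_bound hq1
    obtain ⟨b1', b2', b3', b4'⟩ := Q_bound hq2
    simp only [pairF, colF, Finset.mem_filter, Finset.mem_product]
    exact ⟨⟨⟨⟨mem_entryF a1 a2, mem_entryF a3 a4⟩, hq1⟩,
      ⟨⟨mem_entryF b1' b2', mem_entryF b3' b4'⟩, hq2⟩⟩, hr⟩

instance : Fintype {B : Matrix (Fin 2) (Fin 2) K // SP B} := Fintype.ofFinset FF mem_FF

theorem card_SP : Nat.card {B : Matrix (Fin 2) (Fin 2) K // SP B} = 96 := by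
  rw [Nat.card_eq_fintype_card, Fintype.card_of_subtype FF mem_FF, FF_card]

-- ## invertibility of solutions
theorem Gr_det : Gr.det = 2 := by
  rw [Gr, Matrix.det_fin_two_of]
  decide

theorem SP_isUnit {B : Matrix (Fin 2) (Fin 2) K} (hB : SP B) : IsUnit B.det := by
  have h := congrArg Matrix.det hB
  rw [Matrix.det_mul, Matrix.det_mul, Matrix.det_conjTranspose, Gr_det] at h
  have h2 : (2 : K) * (star B.det * B.det) = 2 * 1 := by linear_combination h
  have h3 : star B.det * B.det = 1 := mul_left_cancel₀ (by decide) h2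
  exact IsUnit.of_mul_eq_one (a := B.det) (star B.det) (by linear_combination h3)

-- ## linear maps from matrices
noncomputable def lmap (B : Matrix (Fin 2) (Fin 2) K) : Lsub →ₗ[RI] Lsub where
  toFun x := ⟨T B x.1, T_mem B x.2⟩
  map_add' x y := Subtype.ext (by
    show T B ((x + y : Lsub) : Fin 2 → ℂ) = T B x.1 + T B y.1
    rw [Submodule.coe_add, T_add])
  map_smul' a x := Subtype.ext (by
    show T B ((a • x : Lsub) : Fin 2 → ℂ) = (a : ℂ) • T B x.1
    have : ((a • x : Lsub) : Fin 2 → ℂ) = (a : ℂ) • (x : Fin 2 → ℂ) := rfl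
    rw [this, T_smul])

theorem lmap_apply (B : Matrix (Fin 2) (Fin 2) K) (x : Lsub) :
    ((lmap B x : Lsub) : Fin 2 → ℂ) = T B x.1 := rfl

noncomputable def lequiv (B C : Matrix (Fin 2) (Fin 2) K) (hBC : B * C = 1) (hCB : C * B = 1) :
    Lsub ≃ₗ[RI] Lsub :=
  LinearEquiv.ofLinear (lmap B) (lmap C)
    (by
      apply LinearMap.ext
      intro x
      apply Subtype.ext
      show T B (T C x.1) = x.1
      rw [T_comp, hBC, T_one])
    (by
      apply LinearMap.ext
      intro x
      apply Subtype.ext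
      show T C (T B x.1) = x.1
      rw [T_comp, hCB, T_one])

-- constants
theorem tc11 : ((⟨1,1⟩ : K) : ℂ) = 1 + I := by simp [toComplex_def']
theorem tc1m1 : ((⟨1,-1⟩ : K) : ℂ) = 1 - I := by
  rw [toComplex_def']
  push_cast
  ring
theorem tc2 : ((2 : K) : ℂ) = 2 := map_ofNat GaussianInt.toComplex 2

theorem T_pres {B : Matrix (Fin 2) (Fin 2) K} (hB : SP B) (x y : Fin 2 → ℂ) :
    hForm (T B x) (T B y) = hForm x y := by
  obtain ⟨q1, q2, r⟩ := (SP_iff B).mp hB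
  have e1 := congrArg (GaussianInt.toComplex) q1
  have e2 := congrArg (GaussianInt.toComplex) q2
  have er := congrArg (GaussianInt.toComplex) r
  simp only [map_add, map_mul, toComplex_star, tc11, tc1m1, tc2] at e1 e2 er
  have er' := congrArg (starRingEnd ℂ) er
  simp only [map_add, map_mul, map_sub, map_one, Complex.conj_conj, Complex.conj_I, map_ofNat] at er'
  rw [hrep (T B x) (T B y), hrep x y, c1_T, c1_T, c2_T, c2_T]
  simp only [map_add, map_mul]
  linear_combination (-((starRingEnd ℂ) (c1 x) * c1 y)) * e1
    + (-((starRingEnd ℂ) (c1 x) * c2 y)) * er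
    + (-((starRingEnd ℂ) (c2 x) * c1 y)) * er'
    + (-((starRingEnd ℂ) (c2 x) * c2 y)) * e2

-- coordinates of basis vectors
theorem c1_b1 : c1 (b1 : Fin 2 → ℂ) = 1 := rfl
theorem c2_b1 : c2 (b1 : Fin 2 → ℂ) = 0 := by
  show ((1:ℂ) - 1) / (1+I) = 0
  simp
theorem c1_b2 : c1 (b2 : Fin 2 → ℂ) = 0 := rfl
theorem c2_b2 : c2 (b2 : Fin 2 → ℂ) = 1 := by
  show ((1+I) - 0) / (1+I) = 1
  rw [sub_zero, div_self hne]

theorem comp0 (x : Fin 2 → ℂ) : x 0 = c1 x + c2 x * (1+I) := by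
  conv_lhs => rw [vec_eq x]
  rfl
theorem comp1 (x : Fin 2 → ℂ) : x 1 = c1 x := rfl

theorem r1_coe (x : Lsub) : ((r1 x : RI) : ℂ) = c1 (x : Fin 2 → ℂ) := rfl
theorem r2_coe (x : Lsub) : ((r2 x : RI) : ℂ) = c2 (x : Fin 2 → ℂ) := rfl

theorem coe2 (a b : RI) (u w : Lsub) (i : Fin 2) :
    ((a • u + b • w : Lsub) : Fin 2 → ℂ) i
      = (a : ℂ) * (u : Fin 2 → ℂ) i + (b : ℂ) * (w : Fin 2 → ℂ) i := by
  simp only [Submodule.coe_add, Submodule.coe_smul, Pi.add_apply, Pi.smul_apply]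
  rfl

noncomputable def Bof (φ : Lsub ≃ₗ[RI] Lsub) : Matrix (Fin 2) (Fin 2) K :=
  Matrix.of ![![xi (r1 (φ b1)), xi (r1 (φ b2))], ![xi (r2 (φ b1)), xi (r2 (φ b2))]]

theorem Bof00 (φ : Lsub ≃ₗ[RI] Lsub) : ((Bof φ 0 0 : K) : ℂ) = c1 (φ b1 : Fin 2 → ℂ) := xi_spec _
theorem Bof01 (φ : Lsub ≃ₗ[RI] Lsub) : ((Bof φ 0 1 : K) : ℂ) = c1 (φ b2 : Fin 2 → ℂ) := xi_spec _
theorem Bof10 (φ : Lsub ≃ₗ[RI] Lsub) : ((Bof φ 1 0 : K) : ℂ) = c2 (φ b1 : Fin 2 → ℂ) := xi_spec _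
theorem Bof11 (φ : Lsub ≃ₗ[RI] Lsub) : ((Bof φ 1 1 : K) : ℂ) = c2 (φ b2 : Fin 2 → ℂ) := xi_spec _

theorem Tof (φ : Lsub ≃ₗ[RI] Lsub) (v : Lsub) :
    T (Bof φ) (v : Fin 2 → ℂ) = (φ v : Fin 2 → ℂ) := by
  have hv : φ v = r1 v • φ b1 + r2 v • φ b2 := by
    conv_lhs => rw [decomp v]
    rw [map_add, map_smul, map_smul]
  rw [hv]
  funext i
  fin_cases i
  · simp only [Fin.zero_eta]
    rw [coe2, T_apply0, Bof00, Bof01, Bof10, Bof11, comp0 (φ b1 : Fin 2 → ℂ),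
      comp0 (φ b2 : Fin 2 → ℂ), r1_coe, r2_coe]
    ring
  · simp only [Fin.mk_one]
    rw [coe2, T_apply1, Bof00, Bof01, comp1 (φ b1 : Fin 2 → ℂ),
      comp1 (φ b2 : Fin 2 → ℂ), r1_coe, r2_coe]
    ring

theorem SPof (φ : Lsub ≃ₗ[RI] Lsub)
    (hφ : ∀ x y : Lsub, hForm (φ x) (φ y) = hForm x y) : SP (Bof φ) := by
  have h11 := hφ b1 b1
  have h12 := hφ b1 b2
  have h22 := hφ b2 b2
  simp only [hrep, c1_b1, c2_b1, c1_b2, c2_b2, map_one, map_zero, mul_one, mul_zero,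
    zero_mul, one_mul, add_zero, zero_add] at h11 h12 h22
  rw [SP_iff]
  refine ⟨?_, ?_, ?_⟩
  · unfold Q
    apply toComplex_injective
    simp only [map_add, map_mul, toComplex_star, tc11, tc1m1, tc2, Bof00, Bof10]
    linear_combination (-1 : ℂ) * h11
  · unfold Q
    apply toComplex_injective
    simp only [map_add, map_mul, toComplex_star, tc11, tc1m1, tc2, Bof01, Bof11]
    linear_combination (-1 : ℂ) * h22
  · unfold R
    apply toComplex_injective
    simp only [map_add, map_mul, toComplex_star, tc11, tc1m1, tc2, Bof00, Bof10, Bof01, Bof11]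
    linear_combination (-1 : ℂ) * h12

noncomputable def theEquiv :
    {φ : Lsub ≃ₗ[↥RI] Lsub // ∀ x y : Lsub, hForm (φ x) (φ y) = hForm x y}
      ≃ {B : Matrix (Fin 2) (Fin 2) K // SP B} where
  toFun p := ⟨Bof p.1, SPof p.1 p.2⟩
  invFun q := ⟨lequiv q.1 (q.1)⁻¹ (Matrix.mul_nonsing_inv q.1 (SP_isUnit q.2))
      (Matrix.nonsing_inv_mul q.1 (SP_isUnit q.2)),
    fun x y => T_pres q.2 (x : Fin 2 → ℂ) (y : Fin 2 → ℂ)⟩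
  left_inv p := Subtype.ext (LinearEquiv.ext fun x => Subtype.ext (Tof p.1 x))
  right_inv q := by
    apply Subtype.ext
    show Bof (lequiv q.1 (q.1)⁻¹ (Matrix.mul_nonsing_inv q.1 (SP_isUnit q.2))
      (Matrix.nonsing_inv_mul q.1 (SP_isUnit q.2))) = q.1
    funext i j
    fin_cases i <;> fin_cases j <;>
      simp only [Fin.zero_eta, Fin.mk_one] <;> apply toComplex_injective
    · rw [Bof00]
      show c1 (T q.1 (b1 : Fin 2 → ℂ)) = _
      rw [c1_T, c1_b1, c2_b1]
      ring
    · rw [Bof01]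
      show c1 (T q.1 (b2 : Fin 2 → ℂ)) = _
      rw [c1_T, c1_b2, c2_b2]
      ring
    · rw [Bof10]
      show c2 (T q.1 (b1 : Fin 2 → ℂ)) = _
      rw [c2_T, c1_b1, c2_b1]
      ring
    · rw [Bof11]
      show c2 (T q.1 (b2 : Fin 2 → ℂ)) = _
      rw [c2_T, c1_b2, c2_b2]
      ring


/-- The group `U(L)` of `ℤ[i]`-module automorphisms of `L` preserving the Hermitian form
`h` has order exactly `96 = 2⁵·3`. -/
theorem card_unitary_L :
    Nat.card {φ : Lsub ≃ₗ[↥RI] Lsub //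
      ∀ x y : Lsub, hForm (φ x) (φ y) = hForm x y} = 96 :=
  (Nat.card_congr theEquiv).trans card_SP


end
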